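/- If a finite simple graph Γ satisfies A(Γ;x) = A(P_t;x) for some t ≥ 2, then Γ is isomorphic to the path graph P_t. -/

import Mathlib

open Finset Polynomial
open scoped Classical

noncomputable section

variable {V : Type*} [Fintype V]

/-- Number of neighbors of `v` inside `S` (as an integer). -/
def degIn (G : SimpleGraph V) (S : Finset V) (v : V) : ℤ :=
  ((S.filter (fun u => G.Adj v u)).card : ℤ)

/-- Number of neighbors of `v` outside `S` (as an integer). -/
def degOut (G : SimpleGraph V) (S : Finset V) (v : V) : ℤ :=
  ((Sᶜ.filter (fun u => G.Adj v u)).card : ℤ)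

/-- The exact index of alliance of `S`. -/
def exactIndex (G : SimpleGraph V) (S : Finset V) : ℤ :=
  if h : S.Nonempty then S.inf' h (fun v => degIn G S v - degOut G S v) else 0

/-- Nonempty vertex subsets inducing a connected subgraph. -/
def goodSets (G : SimpleGraph V) : Finset (Finset V) :=
  Finset.univ.filter (fun S => S.Nonempty ∧ (G.induce (S : Set V)).Connected)

/-- The alliance polynomial. -/
def alliancePoly (G : SimpleGraph V) : Polynomial ℤ :=
  ∑ S ∈ goodSets G, X ^ (((Fintype.card V : ℤ) + exactIndex G S).toNat)

/-- `A_k(Γ)`: number of connected exact defensive `k`-alliances. -/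
def allianceCount (G : SimpleGraph V) (k : ℤ) : ℕ :=
  ((goodSets G).filter (fun S => exactIndex G S = k)).card

end

set_option linter.unusedSectionVars false
set_option maxHeartbeats 1000000

noncomputable section AuxLemmas

variable {V : Type*} [Fintype V]

/-- count of good sets with given "exponent" `n + exactIndex`. -/
def ecount (G : SimpleGraph V) (m : ℤ) : ℕ :=
  ((goodSets G).filter (fun S => (Fintype.card V : ℤ) + exactIndex G S = m)).card

lemma mem_goodSets {G : SimpleGraph V} {S : Finset V} :
    S ∈ goodSets G ↔ S.Nonempty ∧ (G.induce (S : Set V)).Connected := by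
  simp [goodSets]

lemma degIn_add_degOut (G : SimpleGraph V) (S : Finset V) (v : V) :
    degIn G S v + degOut G S v = G.degree v := by
  classical
  rw [degIn, degOut]
  rw [← Nat.cast_add]
  norm_cast
  rw [← Finset.card_union_of_disjoint (Finset.disjoint_filter_filter disjoint_compl_right),
    ← Finset.filter_union, Finset.union_compl]
  rw [SimpleGraph.degree, SimpleGraph.neighborFinset_eq_filter]

lemma degIn_nonneg (G : SimpleGraph V) (S : Finset V) (v : V) : 0 ≤ degIn G S v :=
  Int.natCast_nonneg _

lemma degOut_nonneg (G : SimpleGraph V) (S : Finset V) (v : V) : 0 ≤ degOut G S v :=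
  Int.natCast_nonneg _

lemma degOut_le (G : SimpleGraph V) (S : Finset V) (v : V) :
    degOut G S v ≤ (Sᶜ.card : ℤ) := by
  rw [degOut]
  exact_mod_cast Finset.card_le_card (Finset.filter_subset _ _)

lemma exactIndex_le_of_mem {G : SimpleGraph V} {S : Finset V} {v : V} (hv : v ∈ S) :
    exactIndex G S ≤ degIn G S v - degOut G S v := by
  rw [exactIndex, dif_pos ⟨v, hv⟩]
  exact Finset.inf'_le _ hv

lemma le_exactIndex {G : SimpleGraph V} {S : Finset V} (hS : S.Nonempty) {c : ℤ}
    (h : ∀ v ∈ S, c ≤ degIn G S v - degOut G S v) : c ≤ exactIndex G S := by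
  rw [exactIndex, dif_pos hS]
  exact Finset.le_inf' _ _ h

lemma singleton_mem_goodSets (G : SimpleGraph V) (v : V) : {v} ∈ goodSets G := by
  refine mem_goodSets.2 ⟨Finset.singleton_nonempty v, ?_⟩
  rw [SimpleGraph.connected_iff]
  refine ⟨?_, ⟨⟨v, by simp⟩⟩⟩
  intro a b
  have : a = b := by
    ext
    have ha := a.2; have hb := b.2
    simp only [Finset.coe_singleton, Set.mem_singleton_iff] at ha hb
    rw [ha, hb]
  exact this ▸ SimpleGraph.Reachable.refl _

lemma exactIndex_singleton (G : SimpleGraph V) (v : V) :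
    exactIndex G {v} = -(G.degree v : ℤ) := by
  have h1 : degIn G {v} v = 0 := by
    simp [degIn, Finset.filter_singleton]
  have h2 : degIn G {v} v + degOut G {v} v = G.degree v := degIn_add_degOut G {v} v
  have : exactIndex G {v} = degIn G {v} v - degOut G {v} v := by
    rw [exactIndex, dif_pos (Finset.singleton_nonempty v)]
    simp
  omega

lemma one_le_exponent {G : SimpleGraph V} {S : Finset V} (hS : S ∈ goodSets G) :
    1 ≤ (Fintype.card V : ℤ) + exactIndex G S := by
  obtain ⟨hne, -⟩ := mem_goodSets.1 hS
  have h1 : ((Fintype.card V : ℤ) - 1) ≤ (Fintype.card V : ℤ) + exactIndex G S → _ := id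
  have : -((Fintype.card V : ℤ) - 1) ≤ exactIndex G S := by
    apply le_exactIndex hne
    intro v hv
    have h2 := degOut_le G S v
    have h3 : (Sᶜ.card : ℤ) ≤ (Fintype.card V : ℤ) - 1 := by
      have : Sᶜ.card + S.card = Fintype.card V := by
        rw [Finset.card_compl]
        have := Finset.card_le_univ S
        omega
      have : 1 ≤ S.card := Finset.card_pos.2 hne
      omega
    have := degIn_nonneg G S v
    omega
  omega

end AuxLemmas

noncomputable section Aux2

variable {V : Type*} [Fintype V]

lemma induce_adj_iff {G : SimpleGraph V} {s : Set V} {a b : s} :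
    (G.induce s).Adj a b ↔ G.Adj (a : V) (b : V) := by
  simp [SimpleGraph.induce, SimpleGraph.comap_adj]

lemma reachable_induce_of_walk {G : SimpleGraph V} {s : Set V} {u w : V} (p : G.Walk u w)
    (hp : ∀ x ∈ p.support, x ∈ s) :
    (G.induce s).Reachable ⟨u, hp u p.start_mem_support⟩ ⟨w, hp w p.end_mem_support⟩ := by
  induction p with
  | nil => rfl
  | @cons a b c h q ih =>
    have hb : b ∈ s := hp b (by simp)
    have h1 : (G.induce s).Adj ⟨a, hp a (by simp)⟩ ⟨b, hb⟩ := induce_adj_iff.2 h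
    have h2 := ih (fun x hx => hp x (by simp [hx]))
    exact (h1.reachable).trans h2

lemma induce_connected_of_walks {G : SimpleGraph V} {S : Finset V} (hne : S.Nonempty)
    (hreach : ∀ x ∈ S, ∀ y ∈ S, ∃ p : G.Walk x y, ∀ z ∈ p.support, z ∈ S) :
    (G.induce (S : Set V)).Connected := by
  rw [SimpleGraph.connected_iff]
  obtain ⟨v, hv⟩ := hne
  refine ⟨?_, ⟨⟨v, by simpa using hv⟩⟩⟩
  rintro ⟨x, hx⟩ ⟨y, hy⟩
  obtain ⟨p, hp⟩ := hreach x (by simpa using hx) y (by simpa using hy)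
  have := reachable_induce_of_walk (s := (S : Set V)) p (fun z hz => by simpa using hp z hz)
  exact this

/-- the reachability class of `v` as a finset -/
def reachSet (G : SimpleGraph V) (v : V) : Finset V :=
  Finset.univ.filter (fun u => G.Reachable v u)

lemma mem_reachSet {G : SimpleGraph V} {v u : V} : u ∈ reachSet G v ↔ G.Reachable v u := by
  simp [reachSet]

lemma self_mem_reachSet (G : SimpleGraph V) (v : V) : v ∈ reachSet G v :=
  mem_reachSet.2 (SimpleGraph.Reachable.refl v)

lemma reachSet_mem_goodSets (G : SimpleGraph V) (v : V) : reachSet G v ∈ goodSets G := by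
  refine mem_goodSets.2 ⟨⟨v, self_mem_reachSet G v⟩, ?_⟩
  apply induce_connected_of_walks ⟨v, self_mem_reachSet G v⟩
  intro x hx y hy
  obtain ⟨p⟩ := (mem_reachSet.1 hx).symm.trans (mem_reachSet.1 hy)
  refine ⟨p, fun z hz => ?_⟩
  obtain ⟨q, r, rfl⟩ := SimpleGraph.Walk.mem_support_iff_exists_append.mp hz
  exact mem_reachSet.2 ((mem_reachSet.1 hx).trans ⟨q⟩)

lemma degOut_reachSet (G : SimpleGraph V) (v : V) {u : V} (hu : u ∈ reachSet G v) :
    degOut G (reachSet G v) u = 0 := by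
  rw [degOut]
  norm_cast
  rw [Finset.card_eq_zero, Finset.filter_eq_empty_iff]
  intro w hw
  intro hadj
  exact (Finset.mem_compl.1 hw) (mem_reachSet.2 ((mem_reachSet.1 hu).trans hadj.reachable))

lemma exactIndex_reachSet_bounds (G : SimpleGraph V) (v : V) {c : ℤ}
    (h : ∀ u ∈ reachSet G v, c ≤ (G.degree u : ℤ)) : c ≤ exactIndex G (reachSet G v) := by
  apply le_exactIndex ⟨v, self_mem_reachSet G v⟩
  intro u hu
  have h1 := degIn_add_degOut G (reachSet G v) u
  have h2 := degOut_reachSet G v hu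
  have := h u hu
  omega

lemma exactIndex_reachSet_le (G : SimpleGraph V) (v : V) {u : V} (hu : u ∈ reachSet G v) :
    exactIndex G (reachSet G v) ≤ (G.degree u : ℤ) := by
  have h1 := degIn_add_degOut G (reachSet G v) u
  have h2 := degOut_reachSet G v hu
  have := exactIndex_le_of_mem hu (G := G)
  omega

lemma degree_pos_of_mem_reachSet {G : SimpleGraph V} {v u : V} (hv : 1 ≤ G.degree v)
    (hu : u ∈ reachSet G v) : 1 ≤ G.degree u := by
  rcases eq_or_ne u v with rfl | hne
  · exact hv
  · obtain ⟨p⟩ := (mem_reachSet.1 hu).symm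
    cases p with
    | nil => exact absurd rfl hne
    | @cons _ b _ h q =>
      have : b ∈ G.neighborFinset u := by simpa using h
      have h3 := Finset.card_pos.2 ⟨b, this⟩
      exact h3

lemma mem_of_walk_closed {G : SimpleGraph V} {S : Finset V}
    (hcl : ∀ v ∈ S, ∀ w, G.Adj v w → w ∈ S) :
    ∀ {x y : V} (_ : G.Walk x y), x ∈ S → y ∈ S := by
  intro x y p
  induction p with
  | nil => exact id
  | @cons a b c h q ih => exact fun hx => ih (hcl a hx b h)

lemma eq_univ_of_closed {G : SimpleGraph V} (hpre : G.Preconnected) {S : Finset V}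
    (hne : S.Nonempty) (hcl : ∀ v ∈ S, ∀ w, G.Adj v w → w ∈ S) : S = Finset.univ := by
  obtain ⟨v, hv⟩ := hne
  apply Finset.eq_univ_of_forall
  intro w
  obtain ⟨p⟩ := hpre v w
  exact mem_of_walk_closed hcl p hv

lemma exists_adj_of_good {G : SimpleGraph V} {S : Finset V} (hS : S ∈ goodSets G)
    (hcard : 2 ≤ S.card) {v : V} (hv : v ∈ S) : ∃ w ∈ S, G.Adj v w := by
  obtain ⟨-, hconn⟩ := mem_goodSets.1 hS
  obtain ⟨u, hu, hne⟩ := Finset.exists_mem_ne hcard v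
  obtain ⟨p⟩ := hconn.preconnected ⟨v, by simpa using hv⟩ ⟨u, by simpa using hu⟩
  cases p with
  | nil => exact (hne rfl).elim
  | @cons _ b _ h q =>
    exact ⟨(b : V), by simpa using b.2, induce_adj_iff.1 h⟩

end Aux2

noncomputable section Aux3

variable {V : Type*} [Fintype V]

lemma coeff_alliancePoly (G : SimpleGraph V) (e : ℕ) :
    (alliancePoly G).coeff e =
      (((goodSets G).filter
        (fun S => ((Fintype.card V : ℤ) + exactIndex G S).toNat = e)).card : ℤ) := by
  rw [alliancePoly, Polynomial.finset_sum_coeff]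
  rw [Finset.card_filter]
  push_cast
  apply Finset.sum_congr rfl
  intro S _
  rw [Polynomial.coeff_X_pow]
  by_cases h : ((Fintype.card V : ℤ) + exactIndex G S).toNat = e
  · simp [h]
  · simp [h]
    intro h'
    exact absurd h'.symm h

lemma ecount_eq_of_poly {G : SimpleGraph V} {W : Type*} [Fintype W] {H : SimpleGraph W}
    (h : alliancePoly G = alliancePoly H) (m : ℤ) : ecount G m = ecount H m := by
  rcases le_or_gt m 0 with hm | hm
  · have e1 : ecount G m = 0 := by
      rw [ecount, Finset.card_eq_zero, Finset.filter_eq_empty_iff]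
      intro S hS hSm
      have := one_le_exponent hS
      omega
    have e2 : ecount H m = 0 := by
      rw [ecount, Finset.card_eq_zero, Finset.filter_eq_empty_iff]
      intro S hS hSm
      have := one_le_exponent hS
      omega
    rw [e1, e2]
  · have keyG : (ecount G m : ℤ) = (alliancePoly G).coeff m.toNat := by
      rw [coeff_alliancePoly, ecount]
      refine congrArg _ (congrArg Finset.card (Finset.filter_congr ?_))
      intro S hS
      have h1 := one_le_exponent hS
      omega
    have keyH : (ecount H m : ℤ) = (alliancePoly H).coeff m.toNat := by
      rw [coeff_alliancePoly, ecount]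
      refine congrArg _ (congrArg Finset.card (Finset.filter_congr ?_))
      intro S hS
      have h1 := one_le_exponent hS
      omega
    have : (ecount G m : ℤ) = (ecount H m : ℤ) := by
      rw [keyG, keyH, h]
    exact_mod_cast this

lemma ecount_eq_degreeCount (G : SimpleGraph V) (k : ℤ)
    (hns : ∀ S ∈ goodSets G, 2 ≤ S.card → k < exactIndex G S) :
    ecount G ((Fintype.card V : ℤ) + k) =
      (Finset.univ.filter (fun v => (G.degree v : ℤ) = -k)).card := by
  rw [ecount]
  symm
  apply Finset.card_bij (fun v _ => ({v} : Finset V))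
  · intro v hv
    simp only [Finset.mem_filter, Finset.mem_univ, true_and] at hv
    rw [Finset.mem_filter]
    refine ⟨singleton_mem_goodSets G v, ?_⟩
    rw [exactIndex_singleton]
    omega
  · intro a _ b _ hab
    exact Finset.singleton_injective hab
  · intro S hS
    rw [Finset.mem_filter] at hS
    obtain ⟨hSg, hSm⟩ := hS
    have hk : exactIndex G S = k := by omega
    obtain ⟨hne, -⟩ := mem_goodSets.1 hSg
    have hcard : S.card = 1 := by
      have h1 : 1 ≤ S.card := Finset.card_pos.2 hne
      by_contra hc
      have : 2 ≤ S.card := by omega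
      have := hns S hSg this
      omega
    obtain ⟨v, rfl⟩ := Finset.card_eq_one.1 hcard
    refine ⟨v, ?_, rfl⟩
    simp only [Finset.mem_filter, Finset.mem_univ, true_and]
    have := exactIndex_singleton G v
    omega

end Aux3

noncomputable section Pside

variable {W : Type*} [Fintype W] {H : SimpleGraph W}

lemma degIn_pos_of_good {S : Finset W} (hS : S ∈ goodSets H) (hcard : 2 ≤ S.card)
    {v : W} (hv : v ∈ S) : 1 ≤ degIn H S v := by
  obtain ⟨w, hw, hadj⟩ := exists_adj_of_good hS hcard hv
  rw [degIn]
  exact_mod_cast Finset.card_pos.2 ⟨w, Finset.mem_filter.2 ⟨hw, hadj⟩⟩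

lemma nice_nonsingleton_nonneg (hdeg : ∀ w, H.degree w = 1 ∨ H.degree w = 2) :
    ∀ S ∈ goodSets H, 2 ≤ S.card → 0 ≤ exactIndex H S := by
  intro S hS hcard
  apply le_exactIndex (Finset.card_pos.1 (by omega))
  intro v hv
  have h1 := degIn_pos_of_good hS hcard hv
  have h2 := degIn_add_degOut H S v
  have h3 := degOut_nonneg H S v
  have h4 := hdeg v
  omega

lemma nice_univ_good (hconn : H.Connected) : (Finset.univ : Finset W) ∈ goodSets H := by
  have : Nonempty W := hconn.nonempty
  refine mem_goodSets.2 ⟨Finset.univ_nonempty, ?_⟩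
  rw [Finset.coe_univ]
  exact (SimpleGraph.Iso.connected_iff (SimpleGraph.induceUnivIso H)).2 hconn

lemma degOut_univ (v : W) : degOut H Finset.univ v = 0 := by
  rw [degOut]
  simp

lemma nice_exactIndex_univ (hconn : H.Connected)
    (hdeg : ∀ w, H.degree w = 1 ∨ H.degree w = 2) {w0 : W} (hw0 : H.degree w0 = 1) :
    exactIndex H (Finset.univ : Finset W) = 1 := by
  have : Nonempty W := hconn.nonempty
  have hle : exactIndex H Finset.univ ≤ 1 := by
    have h1 := exactIndex_le_of_mem (G := H) (Finset.mem_univ w0)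
    have h2 := degIn_add_degOut H Finset.univ w0
    have h3 := degOut_univ (H := H) w0
    omega
  have hge : (1 : ℤ) ≤ exactIndex H Finset.univ := by
    apply le_exactIndex Finset.univ_nonempty
    intro v _
    have h2 := degIn_add_degOut H Finset.univ v
    have h3 := degOut_univ (H := H) v
    have h4 := hdeg v
    omega
  omega

lemma nice_proper_nonpos (hconn : H.Connected)
    (hdeg : ∀ w, H.degree w = 1 ∨ H.degree w = 2) {S : Finset W} (hS : S ∈ goodSets H)
    (hcard : 2 ≤ S.card) (hSu : S ≠ Finset.univ) : exactIndex H S ≤ 0 := by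
  have hbd : ∃ v ∈ S, ∃ w, H.Adj v w ∧ w ∉ S := by
    by_contra hc
    push_neg at hc
    exact hSu (eq_univ_of_closed hconn.preconnected (Finset.card_pos.1 (by omega))
      (fun v hv w hadj => hc v hv w hadj))
  obtain ⟨v, hv, w, hadj, hw⟩ := hbd
  have h1 : 1 ≤ degOut H S v := by
    rw [degOut]
    exact_mod_cast Finset.card_pos.2 ⟨w, Finset.mem_filter.2 ⟨Finset.mem_compl.2 hw, hadj⟩⟩
  have h2 := degIn_add_degOut H S v
  have h3 := hdeg v
  have h4 := exactIndex_le_of_mem (G := H) hv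
  omega

lemma nice_exactIndex_le_one (hconn : H.Connected)
    (hdeg : ∀ w, H.degree w = 1 ∨ H.degree w = 2) {w0 : W} (hw0 : H.degree w0 = 1)
    {S : Finset W} (hS : S ∈ goodSets H) :
    exactIndex H S ≤ 1 := by
  obtain ⟨hne, -⟩ := mem_goodSets.1 hS
  rcases eq_or_lt_of_le (Nat.succ_le_of_lt (Finset.card_pos.2 hne)) with h1 | h2
  · obtain ⟨v, rfl⟩ := Finset.card_eq_one.1 h1.symm
    rw [exactIndex_singleton]
    have := hdeg v
    omega
  · rcases eq_or_ne S Finset.univ with rfl | hSu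
    · have h1 := exactIndex_le_of_mem (G := H) (Finset.mem_univ w0)
      have h2 := degIn_add_degOut H Finset.univ w0
      have h3 := degOut_univ (H := H) w0
      omega
    · have := nice_proper_nonpos hconn hdeg hS (by omega) hSu
      omega

lemma nice_eq_univ_of_exactIndex_eq_one (hconn : H.Connected)
    (hdeg : ∀ w, H.degree w = 1 ∨ H.degree w = 2) {S : Finset W} (hS : S ∈ goodSets H)
    (h1 : exactIndex H S = 1) : S = Finset.univ := by
  obtain ⟨hne, -⟩ := mem_goodSets.1 hS
  rcases eq_or_lt_of_le (Nat.succ_le_of_lt (Finset.card_pos.2 hne)) with hc | hc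
  · obtain ⟨v, rfl⟩ := Finset.card_eq_one.1 hc.symm
    rw [exactIndex_singleton] at h1
    have := hdeg v
    omega
  · by_contra hSu
    have := nice_proper_nonpos hconn hdeg hS (by omega) hSu
    omega

lemma nice_ecount_low (hdeg : ∀ w, H.degree w = 1 ∨ H.degree w = 2) {m : ℤ}
    (hm : m < (Fintype.card W : ℤ) - 2) : ecount H m = 0 := by
  rw [ecount, Finset.card_eq_zero, Finset.filter_eq_empty_iff]
  intro S hS hSm
  obtain ⟨hne, -⟩ := mem_goodSets.1 hS
  rcases eq_or_lt_of_le (Nat.succ_le_of_lt (Finset.card_pos.2 hne)) with hc | hc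
  · obtain ⟨v, rfl⟩ := Finset.card_eq_one.1 hc.symm
    rw [exactIndex_singleton] at hSm
    have := hdeg v
    omega
  · have := nice_nonsingleton_nonneg hdeg S hS (by omega)
    omega

lemma nice_ecount_high (hconn : H.Connected)
    (hdeg : ∀ w, H.degree w = 1 ∨ H.degree w = 2) {w0 : W} (hw0 : H.degree w0 = 1) {m : ℤ}
    (hm : (Fintype.card W : ℤ) + 1 < m) : ecount H m = 0 := by
  rw [ecount, Finset.card_eq_zero, Finset.filter_eq_empty_iff]
  intro S hS hSm
  have := nice_exactIndex_le_one hconn hdeg hw0 hS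
  omega

lemma nice_ecount_two (hdeg : ∀ w, H.degree w = 1 ∨ H.degree w = 2) :
    ecount H ((Fintype.card W : ℤ) - 2) =
      (Finset.univ.filter (fun v => H.degree v = 2)).card := by
  have h := ecount_eq_degreeCount H (-2) (fun S hS hc => by
    have := nice_nonsingleton_nonneg hdeg S hS hc
    omega)
  rw [show (Fintype.card W : ℤ) + (-2) = (Fintype.card W : ℤ) - 2 by ring] at h
  rw [h]
  congr 1
  apply Finset.filter_congr
  intro v _
  constructor
  · intro hv; exact_mod_cast (by omega : (H.degree v : ℤ) = 2)
  · intro hv; rw [hv]; norm_num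

lemma nice_ecount_one (hdeg : ∀ w, H.degree w = 1 ∨ H.degree w = 2) :
    ecount H ((Fintype.card W : ℤ) - 1) =
      (Finset.univ.filter (fun v => H.degree v = 1)).card := by
  have h := ecount_eq_degreeCount H (-1) (fun S hS hc => by
    have := nice_nonsingleton_nonneg hdeg S hS hc
    omega)
  rw [show (Fintype.card W : ℤ) + (-1) = (Fintype.card W : ℤ) - 1 by ring] at h
  rw [h]
  congr 1
  apply Finset.filter_congr
  intro v _
  constructor
  · intro hv; exact_mod_cast (by omega : (H.degree v : ℤ) = 1)
  · intro hv; rw [hv]; norm_num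

lemma nice_ecount_top (hconn : H.Connected)
    (hdeg : ∀ w, H.degree w = 1 ∨ H.degree w = 2) {w0 : W} (hw0 : H.degree w0 = 1) :
    ecount H ((Fintype.card W : ℤ) + 1) = 1 := by
  rw [ecount]
  have : (goodSets H).filter
      (fun S => (Fintype.card W : ℤ) + exactIndex H S = (Fintype.card W : ℤ) + 1) =
      {Finset.univ} := by
    apply Finset.ext
    intro S
    simp only [Finset.mem_filter, Finset.mem_singleton]
    constructor
    · rintro ⟨hS, hm⟩
      exact nice_eq_univ_of_exactIndex_eq_one hconn hdeg hS (by omega)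
    · rintro rfl
      refine ⟨nice_univ_good hconn, ?_⟩
      rw [nice_exactIndex_univ hconn hdeg hw0]
  rw [this, Finset.card_singleton]

end Pside

noncomputable section PathFacts

open SimpleGraph

variable {t : ℕ}

lemma pathGraph_nbr_left (ht : 2 ≤ t) {i : Fin t} (h0 : i.val = 0) :
    (pathGraph t).neighborFinset i = {⟨1, by omega⟩} := by
  ext j
  rw [mem_neighborFinset, pathGraph_adj]
  simp only [Finset.mem_singleton, Fin.ext_iff]
  omega

lemma pathGraph_nbr_right (ht : 2 ≤ t) {i : Fin t} (h0 : i.val = t - 1) :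
    (pathGraph t).neighborFinset i = {⟨t - 2, by omega⟩} := by
  have hj := fun (j : Fin t) => j.isLt
  ext j
  rw [mem_neighborFinset, pathGraph_adj]
  simp only [Finset.mem_singleton, Fin.ext_iff]
  have := j.isLt
  omega

lemma pathGraph_nbr_mid (ht : 2 ≤ t) {i : Fin t} (h0 : 0 < i.val) (h1 : i.val < t - 1) :
    (pathGraph t).neighborFinset i = {⟨i.val - 1, by omega⟩, ⟨i.val + 1, by omega⟩} := by
  ext j
  rw [mem_neighborFinset, pathGraph_adj]
  simp only [Finset.mem_insert, Finset.mem_singleton, Fin.ext_iff]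
  omega

lemma pathGraph_degree (ht : 2 ≤ t) (i : Fin t) :
    (pathGraph t).degree i = if i.val = 0 ∨ i.val = t - 1 then 1 else 2 := by
  have hi := i.isLt
  rcases eq_or_ne i.val 0 with h0 | h0
  · rw [SimpleGraph.degree, pathGraph_nbr_left ht h0]
    simp [h0]
  · rcases eq_or_ne i.val (t - 1) with h1 | h1
    · rw [SimpleGraph.degree, pathGraph_nbr_right ht h1]
      simp [h1]
    · rw [SimpleGraph.degree, pathGraph_nbr_mid ht (by omega) (by omega)]
      rw [if_neg (by omega)]
      rw [Finset.card_insert_of_notMem (by simp only [Finset.mem_singleton, Fin.ext_iff]; omega), Finset.card_singleton]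

lemma pathGraph_degree_mem (ht : 2 ≤ t) (i : Fin t) :
    (pathGraph t).degree i = 1 ∨ (pathGraph t).degree i = 2 := by
  rw [pathGraph_degree ht]
  split <;> simp

lemma pathGraph_exists_deg_one (ht : 2 ≤ t) :
    (pathGraph t).degree (⟨0, by omega⟩ : Fin t) = 1 := by
  rw [pathGraph_degree ht]
  simp

lemma pathGraph_count_deg_one (ht : 2 ≤ t) :
    (Finset.univ.filter (fun v : Fin t => (pathGraph t).degree v = 1)).card = 2 := by
  have : (Finset.univ.filter (fun v : Fin t => (pathGraph t).degree v = 1)) =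
      {⟨0, by omega⟩, ⟨t - 1, by omega⟩} := by
    ext j
    simp only [Finset.mem_filter, Finset.mem_univ, true_and, Finset.mem_insert,
      Finset.mem_singleton, Fin.ext_iff]
    rw [pathGraph_degree ht]
    split <;> rename_i hsp
    · simp only [eq_self_iff_true, true_iff]
      omega
    · push_neg at hsp
      simp only [OfNat.ofNat_ne_one, false_iff]  -- (2 = 1) ↔ ...
      omega
  rw [this]
  rw [Finset.card_insert_of_notMem (by simp only [Finset.mem_singleton, Fin.ext_iff]; omega), Finset.card_singleton]

lemma pathGraph_count_deg_two (ht : 2 ≤ t) :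
    (Finset.univ.filter (fun v : Fin t => (pathGraph t).degree v = 2)).card = t - 2 := by
  have hsum := Finset.card_filter_add_card_filter_not
    (s := (Finset.univ : Finset (Fin t))) (p := fun v => (pathGraph t).degree v = 1)
  have heq : (Finset.univ.filter (fun v : Fin t => ¬ (pathGraph t).degree v = 1)) =
      (Finset.univ.filter (fun v : Fin t => (pathGraph t).degree v = 2)) := by
    apply Finset.filter_congr
    intro v _
    have := pathGraph_degree_mem ht v
    constructor
    · intro hv; omega
    · intro hv; omega
  have h1 := pathGraph_count_deg_one ht
  rw [heq, h1] at hsum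
  simp only [Finset.card_univ, Fintype.card_fin] at hsum
  omega

lemma pathGraph_connected' (ht : 2 ≤ t) : (pathGraph t).Connected := by
  obtain ⟨s, rfl⟩ : ∃ s, t = s + 1 := ⟨t - 1, by omega⟩
  exact pathGraph_connected s

end PathFacts

noncomputable section PathBuild

open SimpleGraph SimpleGraph.Walk

variable {V : Type*} [Fintype V] {G : SimpleGraph V}

lemma getVert_injOn' {u v : V} {p : G.Walk u v} (hp : p.IsPath) :
    ∀ i j, i ≤ p.length → j ≤ p.length → p.getVert i = p.getVert j → i = j := by
  induction p with
  | nil => intro i j hi hj _; simp at hi hj; omega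
  | @cons a b c h q ih =>
    intro i j hi hj hij
    rw [Walk.cons_isPath_iff] at hp
    obtain ⟨hq, ha⟩ := hp
    match i, j with
    | 0, 0 => rfl
    | 0, j + 1 =>
      exfalso
      apply ha
      rw [Walk.mem_support_iff_exists_getVert]
      refine ⟨j, ?_, ?_⟩
      · rw [← Walk.getVert_cons_succ q h (n := j), ← hij, Walk.getVert_zero]
      · simp only [Walk.length_cons] at hj; omega
    | i + 1, 0 =>
      exfalso
      apply ha
      rw [Walk.mem_support_iff_exists_getVert]
      refine ⟨i, ?_, ?_⟩
      · rw [show q.getVert i = (Walk.cons h q).getVert (i+1) from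
          (Walk.getVert_cons_succ q h).symm, hij]
        simp
      · simp only [Walk.length_cons] at hi; omega
    | i + 1, j + 1 =>
      have : i = j := by
        apply ih hq i j
        · simp only [Walk.length_cons] at hi; omega
        · simp only [Walk.length_cons] at hj; omega
        · rw [← Walk.getVert_cons_succ q h, ← Walk.getVert_cons_succ q h (n := j), hij]
      omega

lemma getVert_mem_support' {u v : V} (p : G.Walk u v) {i : ℕ} (hi : i ≤ p.length) :
    p.getVert i ∈ p.support :=
  Walk.mem_support_iff_exists_getVert.2 ⟨i, rfl, hi⟩

lemma isPath_concat' {u v w : V} {p : G.Walk u v} (hp : p.IsPath) (h : G.Adj v w)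
    (hw : w ∉ p.support) : (p.concat h).IsPath := by
  rw [Walk.isPath_def, Walk.support_concat, List.nodup_append]
  refine ⟨hp.support_nodup, List.nodup_singleton w, ?_⟩
  intro x hx y hy hxy
  rw [List.mem_singleton] at hy
  subst hy
  subst hxy
  exact hw hx

/-- an interior vertex of a path has two distinct neighbors on the path -/
lemma interior_two_neighbors {u v x : V} {p : G.Walk u v} (hp : p.IsPath)
    (hx : x ∈ p.support) (hxu : x ≠ u) (hxv : x ≠ v) :
    ∃ a b : V, a ∈ p.support ∧ b ∈ p.support ∧ a ≠ b ∧ G.Adj x a ∧ G.Adj x b := by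
  set q1 := p.takeUntil x hx with hq1
  set q2 := p.dropUntil x hx with hq2
  have hspec : q1.append q2 = p := Walk.take_spec p hx
  have hsupp : p.support = q1.support ++ q2.support.tail := by
    rw [← hspec, Walk.support_append]
  -- q1 : u → x, q2 : x → v
  have hl1 : 0 < q1.length := by
    rcases Nat.eq_zero_or_pos q1.length with h0 | h0
    · exact absurd (Walk.eq_of_length_eq_zero h0).symm hxu
    · exact h0
  have hl2 : 0 < q2.length := by
    rcases Nat.eq_zero_or_pos q2.length with h0 | h0
    · exact absurd (Walk.eq_of_length_eq_zero h0) hxv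
    · exact h0
  set a := q1.getVert (q1.length - 1) with hadef
  set b := q2.getVert 1 with hbdef
  have hadj_a : G.Adj a x := by
    have := q1.adj_getVert_succ (i := q1.length - 1) (by omega)
    rw [show q1.length - 1 + 1 = q1.length by omega, Walk.getVert_length] at this
    exact this
  have hadj_b : G.Adj x b := by
    have := q2.adj_getVert_succ (i := 0) (by omega)
    rw [Walk.getVert_zero] at this
    exact this
  have ha_mem : a ∈ q1.support := getVert_mem_support' q1 (by omega)
  have hb_mem : b ∈ q2.support := getVert_mem_support' q2 (by omega)
  have hb_tail : b ∈ q2.support.tail := by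
    rw [Walk.support_eq_cons] at hb_mem
    rcases List.mem_cons.1 hb_mem with h0 | h0
    · exact absurd h0.symm hadj_b.ne
    · exact h0
  have hab : a ≠ b := by
    have hnd : (q1.support ++ q2.support.tail).Nodup := by
      rw [← hsupp]; exact hp.support_nodup
    exact fun h => (List.disjoint_of_nodup_append hnd) ha_mem (h ▸ hb_tail)
  refine ⟨a, b, ?_, ?_, hab, hadj_a.symm, hadj_b⟩
  · rw [hsupp]; exact List.mem_append_left _ ha_mem
  · rw [hsupp]; exact List.mem_append_right _ hb_tail

lemma exists_path_of_length (hpre : G.Preconnected)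
    (hdeg : ∀ v, G.degree v ≤ 2) {u0 : V} (hu0 : G.degree u0 = 1) :
    ∀ k, k < Fintype.card V → ∃ (v : V) (p : G.Walk u0 v), p.IsPath ∧ p.length = k := by
  intro k
  induction k with
  | zero => exact fun _ => ⟨u0, Walk.nil, Walk.IsPath.nil, rfl⟩
  | succ k ih =>
    intro hk
    obtain ⟨v, p, hp, hl⟩ := ih (by omega)
    set T : Finset V := p.support.toFinset with hT
    have hmemT : ∀ z, z ∈ T ↔ z ∈ p.support := by
      intro z; rw [hT, List.mem_toFinset]
    have hTcard : T.card = k + 1 := by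
      rw [hT, List.toFinset_card_of_nodup hp.support_nodup, Walk.length_support, hl]
    have hTne : T ≠ Finset.univ := by
      intro h
      rw [h, Finset.card_univ] at hTcard
      omega
    have hncl : ¬ (∀ x ∈ T, ∀ y, G.Adj x y → y ∈ T) := by
      intro hcl
      exact hTne (eq_univ_of_closed hpre ⟨u0, (hmemT u0).2 p.start_mem_support⟩ hcl)
    push_neg at hncl
    obtain ⟨x, hxT, y, hadj, hyT⟩ := hncl
    have hx : x ∈ p.support := (hmemT x).1 hxT
    have hy : y ∉ p.support := fun hc => hyT ((hmemT y).2 hc)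
    by_cases hxv : x = v
    · subst hxv
      exact ⟨y, p.concat hadj, isPath_concat' hp hadj hy,
        by rw [Walk.length_concat, hl]⟩
    · exfalso
      by_cases hxu : x = u0
      · subst hxu
        have hlpos : 0 < p.length := by
          rcases Nat.eq_zero_or_pos p.length with h0 | h0
          · exact absurd (Walk.eq_of_length_eq_zero h0) hxv
          · exact h0
        set s0 := p.getVert 1 with hs0
        have hadj0 : G.Adj x s0 := by
          have := p.adj_getVert_succ (i := 0) hlpos
          rwa [Walk.getVert_zero] at this
        have hs0mem : s0 ∈ p.support := getVert_mem_support' p (by omega)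
        have hys0 : y ≠ s0 := fun h => hy (h ▸ hs0mem)
        have hsub : ({s0, y} : Finset V) ⊆ G.neighborFinset x := by
          intro z hz
          rcases Finset.mem_insert.1 hz with rfl | hz
          · exact (SimpleGraph.mem_neighborFinset _ _ _).2 hadj0
          · rw [Finset.mem_singleton] at hz
            subst hz
            exact (SimpleGraph.mem_neighborFinset _ _ _).2 hadj
        have hcard2 : ({s0, y} : Finset V).card = 2 := by
          rw [Finset.card_insert_of_notMem (by simpa using fun h => hys0 h.symm),
            Finset.card_singleton]
        have := Finset.card_le_card hsub
        rw [hcard2] at this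
        rw [SimpleGraph.degree] at hu0
        omega
      · obtain ⟨a, b, haS, hbS, hab, hxa, hxb⟩ := interior_two_neighbors hp hx hxu hxv
        have hya : y ≠ a := fun h => hy (h ▸ haS)
        have hyb : y ≠ b := fun h => hy (h ▸ hbS)
        have hsub : ({a, b, y} : Finset V) ⊆ G.neighborFinset x := by
          intro z hz
          rcases Finset.mem_insert.1 hz with rfl | hz
          · exact (SimpleGraph.mem_neighborFinset _ _ _).2 hxa
          · rcases Finset.mem_insert.1 hz with rfl | hz
            · exact (SimpleGraph.mem_neighborFinset _ _ _).2 hxb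
            · rw [Finset.mem_singleton] at hz
              subst hz
              exact (SimpleGraph.mem_neighborFinset _ _ _).2 hadj
        have hcard3 : ({a, b, y} : Finset V).card = 3 := by
          rw [Finset.card_insert_of_notMem, Finset.card_insert_of_notMem, Finset.card_singleton]
          · simpa using fun h => hyb h.symm
          · simp only [Finset.mem_insert, Finset.mem_singleton]
            push_neg
            exact ⟨hab, fun h => hya h.symm⟩
        have := Finset.card_le_card hsub
        rw [hcard3] at this
        have := hdeg x
        rw [SimpleGraph.degree] at this
        omega

lemma iso_of_nice {t : ℕ} (ht : 2 ≤ t)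
    (hcard : Fintype.card V = t) (hconn : G.Connected)
    (hdeg : ∀ v, G.degree v ≤ 2) {u0 : V} (hu0 : G.degree u0 = 1) :
    Nonempty (G ≃g pathGraph t) := by
  obtain ⟨v, p, hp, hl⟩ := exists_path_of_length hconn.preconnected hdeg hu0 (t - 1)
    (by omega)
  have hinj := getVert_injOn' hp
  set f : Fin t → V := fun i => p.getVert i.val with hf
  have hlen : p.length = t - 1 := hl
  have hile : ∀ i : Fin t, i.val ≤ p.length := by
    intro i; have := i.isLt; omega
  have hfinj : Function.Injective f := by
    intro i j hij
    exact Fin.ext (hinj i.val j.val (hile i) (hile j) hij)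
  have hbij : Function.Bijective f := by
    rw [Fintype.bijective_iff_injective_and_card]
    exact ⟨hfinj, by simp [hcard]⟩
  -- f 0 = u0 has degree one
  have hf0 : f ⟨0, by omega⟩ = u0 := Walk.getVert_zero p
  have hadj1 : ∀ i j : Fin t, (pathGraph t).Adj i j → G.Adj (f i) (f j) := by
    intro i j hij
    rw [pathGraph_adj] at hij
    rcases hij with hij | hij
    · have : i.val < p.length := by have := j.isLt; omega
      have h2 := p.adj_getVert_succ this
      rwa [show i.val + 1 = j.val from hij] at h2
    · have : j.val < p.length := by have := i.isLt; omega
      have h2 := p.adj_getVert_succ this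
      rw [show j.val + 1 = i.val from hij] at h2
      exact h2.symm
  have key : ∀ i j : Fin t, G.Adj (f i) (f j) → i.val < j.val → j.val = i.val + 1 := by
    intro i j hadj hlt
    by_contra hne
    have hj2 : i.val + 2 ≤ j.val := by omega
    rcases Nat.eq_zero_or_pos i.val with h0 | h0
    · -- i = 0 : f i = u0 of degree 1
      have hfi : f i = u0 := by
        rw [hf]
        simp only [h0]
        exact Walk.getVert_zero p
      set s0 := p.getVert 1 with hs0
      have hadj0 : G.Adj (f i) s0 := by
        have := p.adj_getVert_succ (i := 0) (by omega)
        rw [Walk.getVert_zero] at this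
        rw [hfi]
        exact this
      have hnej : f j ≠ s0 := by
        intro hc
        have : j.val = 1 := hinj j.val 1 (hile j) (by omega) hc
        omega
      have hsub : ({s0, f j} : Finset V) ⊆ G.neighborFinset (f i) := by
        intro z hz
        rcases Finset.mem_insert.1 hz with rfl | hz
        · exact (SimpleGraph.mem_neighborFinset _ _ _).2 hadj0
        · rw [Finset.mem_singleton] at hz
          subst hz
          exact (SimpleGraph.mem_neighborFinset _ _ _).2 hadj
      have hcard2 : ({s0, f j} : Finset V).card = 2 := by
        rw [Finset.card_insert_of_notMem (by simpa using fun h => hnej h.symm),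
          Finset.card_singleton]
      have hle := Finset.card_le_card hsub
      rw [hcard2] at hle
      rw [hfi] at hle
      rw [SimpleGraph.degree] at hu0
      omega
    · -- interior
      set a := p.getVert (i.val - 1) with hadef
      set b := p.getVert (i.val + 1) with hbdef
      have hadj_a : G.Adj (f i) a := by
        have := p.adj_getVert_succ (i := i.val - 1) (by have := hile j; omega)
        rw [show i.val - 1 + 1 = i.val by omega] at this
        exact this.symm
      have hadj_b : G.Adj (f i) b := p.adj_getVert_succ (by have := hile j; omega)
      have hab : a ≠ b := by
        intro hc
        have := hinj (i.val - 1) (i.val + 1) (by have := hile j; omega)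
          (by have := hile j; omega) hc
        omega
      have hja : f j ≠ a := by
        intro hc
        have := hinj j.val (i.val - 1) (hile j) (by have := hile j; omega) hc
        omega
      have hjb : f j ≠ b := by
        intro hc
        have := hinj j.val (i.val + 1) (hile j) (by have := hile j; omega) hc
        omega
      have hsub : ({a, b, f j} : Finset V) ⊆ G.neighborFinset (f i) := by
        intro z hz
        rcases Finset.mem_insert.1 hz with rfl | hz
        · exact (SimpleGraph.mem_neighborFinset _ _ _).2 hadj_a
        · rcases Finset.mem_insert.1 hz with rfl | hz
          · exact (SimpleGraph.mem_neighborFinset _ _ _).2 hadj_b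
          · rw [Finset.mem_singleton] at hz
            subst hz
            exact (SimpleGraph.mem_neighborFinset _ _ _).2 hadj
      have hcard3 : ({a, b, f j} : Finset V).card = 3 := by
        rw [Finset.card_insert_of_notMem, Finset.card_insert_of_notMem,
          Finset.card_singleton]
        · simpa using fun h => hjb h.symm
        · simp only [Finset.mem_insert, Finset.mem_singleton]
          push_neg
          exact ⟨hab, fun h => hja h.symm⟩
      have hle := Finset.card_le_card hsub
      rw [hcard3] at hle
      have := hdeg (f i)
      rw [SimpleGraph.degree] at this
      omega
  have hadj2 : ∀ i j : Fin t, G.Adj (f i) (f j) → (pathGraph t).Adj i j := by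
    intro i j hadj
    have hne : i.val ≠ j.val := by
      intro hc
      exact hadj.ne (congrArg f (Fin.ext hc))
    rw [pathGraph_adj]
    rcases lt_or_gt_of_ne hne with hlt | hlt
    · left
      have := key i j hadj hlt
      omega
    · right
      have := key j i hadj.symm hlt
      omega
  let e := Equiv.ofBijective f hbij
  refine ⟨{ toEquiv := e.symm, map_rel_iff' := ?_ }⟩
  intro a b
  show (pathGraph t).Adj (e.symm a) (e.symm b) ↔ G.Adj a b
  constructor
  · intro hadj
    have h1 := hadj1 _ _ hadj
    have h2 : f (e.symm a) = a := e.apply_symm_apply a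
    have h3 : f (e.symm b) = b := e.apply_symm_apply b
    rwa [h2, h3] at h1
  · intro hadj
    apply hadj2
    have h2 : f (e.symm a) = a := e.apply_symm_apply a
    have h3 : f (e.symm b) = b := e.apply_symm_apply b
    rw [h2, h3]
    exact hadj

end PathBuild

/-- path graphs are characterized by their alliance polynomials. -/
theorem eq_pathGraph_of_alliancePoly {V : Type*} [Fintype V] (G : SimpleGraph V)
    (t : ℕ) (ht : 2 ≤ t)
    (h : alliancePoly G = alliancePoly (SimpleGraph.pathGraph t)) :
    Nonempty (G ≃g SimpleGraph.pathGraph t) := by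
  classical
  set P := SimpleGraph.pathGraph t with hP
  have hcnt : ∀ m : ℤ, ecount G m = ecount P m := fun m => ecount_eq_of_poly h m
  have hdegP : ∀ w : Fin t, P.degree w = 1 ∨ P.degree w = 2 := pathGraph_degree_mem ht
  have hconnP : P.Connected := pathGraph_connected' ht
  have hw0 : P.degree (⟨0, by omega⟩ : Fin t) = 1 := pathGraph_exists_deg_one ht
  -- coefficients of the path polynomial
  have hPlow : ∀ m : ℤ, m < (t : ℤ) - 2 → ecount P m = 0 := by
    intro m hm
    apply nice_ecount_low hdegP
    rw [Fintype.card_fin]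
    exact hm
  have hPhigh : ∀ m : ℤ, (t : ℤ) + 1 < m → ecount P m = 0 := by
    intro m hm
    apply nice_ecount_high hconnP hdegP hw0
    rw [Fintype.card_fin]
    exact hm
  have hP2 : ecount P ((t : ℤ) - 2) = t - 2 := by
    have h1 := nice_ecount_two (H := P) hdegP
    rw [Fintype.card_fin] at h1
    rw [h1, pathGraph_count_deg_two ht]
  have hP1 : ecount P ((t : ℤ) - 1) = 2 := by
    have h1 := nice_ecount_one (H := P) hdegP
    rw [Fintype.card_fin] at h1
    rw [h1, pathGraph_count_deg_one ht]
  have hPtop : ecount P ((t : ℤ) + 1) = 1 := by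
    have h1 := nice_ecount_top hconnP hdegP hw0
    rw [Fintype.card_fin] at h1
    exact h1
  -- every good set has exponent in [t-2, t+1]
  have hmem : ∀ S ∈ goodSets G, ecount G ((Fintype.card V : ℤ) + exactIndex G S) ≠ 0 := by
    intro S hS
    exact Finset.card_ne_zero_of_mem (Finset.mem_filter.2 ⟨hS, rfl⟩)
  have hrange : ∀ S ∈ goodSets G,
      (t : ℤ) - 2 ≤ (Fintype.card V : ℤ) + exactIndex G S ∧ (Fintype.card V : ℤ) + exactIndex G S ≤ (t : ℤ) + 1 := by
    intro S hS
    constructor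
    · by_contra hc
      exact hmem S hS (by rw [hcnt]; exact hPlow _ (by omega))
    · by_contra hc
      exact hmem S hS (by rw [hcnt]; exact hPhigh _ (by omega))
  -- degree bounds from singletons
  have hdegbound : ∀ v : V, (Fintype.card V : ℤ) - (t : ℤ) - 1 ≤ (G.degree v : ℤ) ∧
      (G.degree v : ℤ) ≤ (Fintype.card V : ℤ) - (t : ℤ) + 2 := by
    intro v
    have h1 := hrange {v} (singleton_mem_goodSets G v)
    rw [exactIndex_singleton] at h1
    omega
  -- non-singleton good sets have large exact index
  have hns : ∀ S ∈ goodSets G, 2 ≤ S.card → (t : ℤ) - (Fintype.card V : ℤ) ≤ exactIndex G S := by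
    intro S hS hc
    apply le_exactIndex (Finset.card_pos.1 (by omega))
    intro v hv
    have h1 := degIn_pos_of_good hS hc hv
    have h2 := degIn_add_degOut G S v
    have h3 := (hdegbound v).2
    have h4 := degOut_nonneg G S v
    omega
  -- vertex degree counts
  have hc2 : (Finset.univ.filter (fun v : V => (G.degree v : ℤ) = (Fintype.card V : ℤ) - (t : ℤ) + 2)).card
      = t - 2 := by
    have h1 := ecount_eq_degreeCount G ((t : ℤ) - 2 - (Fintype.card V : ℤ)) (fun S hS hc => by
      have := hns S hS hc; omega)
    rw [show (Fintype.card V : ℤ) + ((t : ℤ) - 2 - (Fintype.card V : ℤ)) = (t : ℤ) - 2 by ring] at h1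
    rw [hcnt, hP2] at h1
    have h2 : (Finset.univ.filter (fun v : V => (G.degree v : ℤ) = -((t : ℤ) - 2 - (Fintype.card V : ℤ)))) =
        (Finset.univ.filter (fun v : V => (G.degree v : ℤ) = (Fintype.card V : ℤ) - (t : ℤ) + 2)) := by
      apply Finset.filter_congr
      intro v _
      constructor <;> (intro hv; omega)
    rw [h2] at h1
    exact h1.symm
  have hc1 : (Finset.univ.filter (fun v : V => (G.degree v : ℤ) = (Fintype.card V : ℤ) - (t : ℤ) + 1)).card
      = 2 := by
    have h1 := ecount_eq_degreeCount G ((t : ℤ) - 1 - (Fintype.card V : ℤ)) (fun S hS hc => by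
      have := hns S hS hc; omega)
    rw [show (Fintype.card V : ℤ) + ((t : ℤ) - 1 - (Fintype.card V : ℤ)) = (t : ℤ) - 1 by ring] at h1
    rw [hcnt, hP1] at h1
    have h2 : (Finset.univ.filter (fun v : V => (G.degree v : ℤ) = -((t : ℤ) - 1 - (Fintype.card V : ℤ)))) =
        (Finset.univ.filter (fun v : V => (G.degree v : ℤ) = (Fintype.card V : ℤ) - (t : ℤ) + 1)) := by
      apply Finset.filter_congr
      intro v _
      constructor <;> (intro hv; omega)
    rw [h2] at h1
    exact h1.symm
  -- (Fintype.card V : ℤ) ≤ t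
  have hNle : (Fintype.card V : ℤ) ≤ (t : ℤ) := by
    by_contra hc
    push_neg at hc
    obtain ⟨v, hv⟩ : ∃ v : V, (G.degree v : ℤ) = (Fintype.card V : ℤ) - (t : ℤ) + 1 := by
      have : (Finset.univ.filter (fun v : V => (G.degree v : ℤ) = (Fintype.card V : ℤ) - (t : ℤ) + 1)).Nonempty := by
        rw [← Finset.card_pos, hc1]; omega
      obtain ⟨v, hv⟩ := this
      exact ⟨v, (Finset.mem_filter.1 hv).2⟩
    have hv1 : 1 ≤ G.degree v := by omega
    have hgood := reachSet_mem_goodSets G v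
    have h1 : (1 : ℤ) ≤ exactIndex G (reachSet G v) := by
      apply exactIndex_reachSet_bounds
      intro u hu
      have := degree_pos_of_mem_reachSet hv1 hu
      omega
    have := (hrange _ hgood).2
    omega
  -- t ≤ (Fintype.card V : ℤ) via the two disjoint degree classes
  have hNge : (t : ℤ) ≤ (Fintype.card V : ℤ) := by
    have hdisj : Disjoint
        (Finset.univ.filter (fun v : V => (G.degree v : ℤ) = (Fintype.card V : ℤ) - (t : ℤ) + 2))
        (Finset.univ.filter (fun v : V => (G.degree v : ℤ) = (Fintype.card V : ℤ) - (t : ℤ) + 1)) := by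
      rw [Finset.disjoint_left]
      intro a ha hb
      simp only [Finset.mem_filter, Finset.mem_univ, true_and] at ha hb
      omega
    have := Finset.card_le_univ
      ((Finset.univ.filter (fun v : V => (G.degree v : ℤ) = (Fintype.card V : ℤ) - (t : ℤ) + 2)) ∪
       (Finset.univ.filter (fun v : V => (G.degree v : ℤ) = (Fintype.card V : ℤ) - (t : ℤ) + 1)))
    rw [Finset.card_union_of_disjoint hdisj, hc2, hc1] at this
    omega
  have hNt : (Fintype.card V : ℤ) = (t : ℤ) := le_antisymm hNle hNge
  have hcardV : Fintype.card V = t := by exact_mod_cast hNt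
  -- no vertices of degree 0
  have hF0 : ∀ v : V, G.degree v ≠ 0 := by
    intro v hv0
    -- partition count
    have hdisj12 : Disjoint
        (Finset.univ.filter (fun v : V => (G.degree v : ℤ) = (Fintype.card V : ℤ) - (t : ℤ) + 2))
        (Finset.univ.filter (fun v : V => (G.degree v : ℤ) = (Fintype.card V : ℤ) - (t : ℤ) + 1)) := by
      rw [Finset.disjoint_left]
      intro a ha hb
      simp only [Finset.mem_filter, Finset.mem_univ, true_and] at ha hb
      omega
    set F12 := (Finset.univ.filter (fun v : V => (G.degree v : ℤ) = (Fintype.card V : ℤ) - (t : ℤ) + 2)) ∪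
       (Finset.univ.filter (fun v : V => (G.degree v : ℤ) = (Fintype.card V : ℤ) - (t : ℤ) + 1)) with hF12
    have hvnot : v ∉ F12 := by
      rw [hF12]
      simp only [Finset.mem_union, Finset.mem_filter, Finset.mem_univ, true_and]
      push_neg
      constructor <;> (rw [hv0]; omega)
    have hcard12 : F12.card = t := by
      rw [hF12, Finset.card_union_of_disjoint hdisj12, hc2, hc1]
      omega
    have : F12.card < Fintype.card V := Finset.card_lt_card
      (Finset.ssubset_univ_iff.2 (fun hF => hvnot (hF ▸ Finset.mem_univ v)))
    omega
  have hdeg12 : ∀ v : V, G.degree v = 1 ∨ G.degree v = 2 := by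
    intro v
    have h1 := (hdegbound v).1
    have h2 := (hdegbound v).2
    have h3 := hF0 v
    omega
  -- G is connected
  have hne : Nonempty V := by
    rw [← Fintype.card_pos_iff, hcardV]
    omega
  have hpre : G.Preconnected := by
    intro u w
    have hgu := reachSet_mem_goodSets G u
    have hgw := reachSet_mem_goodSets G w
    have hidx : ∀ x : V, (Fintype.card V : ℤ) + exactIndex G (reachSet G x) = (t : ℤ) + 1 := by
      intro x
      have h1 : (1 : ℤ) ≤ exactIndex G (reachSet G x) := by
        apply exactIndex_reachSet_bounds
        intro y hy
        have := hdeg12 y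
        omega
      have h2 := (hrange _ (reachSet_mem_goodSets G x)).2
      omega
    have hcard1 : ((goodSets G).filter
        (fun S => (Fintype.card V : ℤ) + exactIndex G S = (t : ℤ) + 1)).card ≤ 1 := by
      have : ecount G ((t : ℤ) + 1) = 1 := by rw [hcnt, hPtop]
      rw [ecount] at this
      omega
    have hmu : reachSet G u ∈ (goodSets G).filter
        (fun S => (Fintype.card V : ℤ) + exactIndex G S = (t : ℤ) + 1) :=
      Finset.mem_filter.2 ⟨hgu, hidx u⟩
    have hmw : reachSet G w ∈ (goodSets G).filter
        (fun S => (Fintype.card V : ℤ) + exactIndex G S = (t : ℤ) + 1) :=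
      Finset.mem_filter.2 ⟨hgw, hidx w⟩
    have heq : reachSet G u = reachSet G w := Finset.card_le_one.1 hcard1 _ hmu _ hmw
    have : w ∈ reachSet G u := heq ▸ self_mem_reachSet G w
    exact mem_reachSet.1 this
  have hconn : G.Connected := by
    haveI := hne
    exact ⟨hpre⟩
  -- a degree one vertex
  obtain ⟨u0, hu0⟩ : ∃ u0 : V, G.degree u0 = 1 := by
    have hne1 : (Finset.univ.filter
        (fun v : V => (G.degree v : ℤ) = (Fintype.card V : ℤ) - (t : ℤ) + 1)).Nonempty := by
      rw [← Finset.card_pos, hc1]; omega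
    obtain ⟨v, hv⟩ := hne1
    have := (Finset.mem_filter.1 hv).2
    exact ⟨v, by omega⟩
  exact iso_of_nice ht hcardV hconn (fun v => by have := hdeg12 v; omega) hu0
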